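/- The following exact evaluation of a product of Gamma values holds: Γ(9/15)²·Γ(12/15)³·Γ(6/15) / (Γ(8/15)²·Γ(14/15)·Γ(13/15)²·Γ(4/15)) = (1/2)·√(3/5)·(1/sin(3π/15)). -/

import Mathlib

open Real Set

namespace GammaTripAux

/-- Log-convexity of `x ↦ log Γ(x/3 + c)` on `(0, ∞)` for `c ≥ 0`. -/
lemma convexOn_log_Gamma_third {c : ℝ} (hc : 0 ≤ c) :
    ConvexOn ℝ (Ioi (0 : ℝ)) (fun x => Real.log (Real.Gamma (x / 3 + c))) := by
  have h := Real.convexOn_log_Gamma.comp_affineMap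
    ((DistribSMul.toLinearMap ℝ ℝ ((1 : ℝ) / 3)).toAffineMap + AffineMap.const ℝ ℝ c)
  refine (h.subset (fun x hx => ?_) (convex_Ioi _)).congr fun x _ => ?_
  · simp only [Set.mem_preimage, AffineMap.coe_add, AffineMap.coe_const, Pi.add_apply,
      LinearMap.coe_toAffineMap, DistribSMul.toLinearMap_apply, smul_eq_mul,
      Function.const_apply, Set.mem_Ioi]
    have hx' : (0 : ℝ) < x := hx
    nlinarith
  · simp only [Function.comp_apply, AffineMap.coe_add, AffineMap.coe_const, Pi.add_apply,
      LinearMap.coe_toAffineMap, DistribSMul.toLinearMap_apply, smul_eq_mul,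
      Function.const_apply]
    ring_nf

/-- Auxiliary function for the triplication formula. -/
noncomputable def triplingGamma (s : ℝ) : ℝ :=
  Real.Gamma (s / 3) * Real.Gamma (s / 3 + 1 / 3) * Real.Gamma (s / 3 + 2 / 3) *
    (3 : ℝ) ^ (s - 1 / 2) / (2 * π)

lemma triplingGamma_add_one {s : ℝ} (hs : s ≠ 0) :
    triplingGamma (s + 1) = s * triplingGamma s := by
  have e1 : (s + 1) / 3 = s / 3 + 1 / 3 := by ring
  have e2 : s / 3 + 1 / 3 + 1 / 3 = s / 3 + 2 / 3 := by ring
  have e3 : s / 3 + 1 / 3 + 2 / 3 = s / 3 + 1 := by ring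
  rw [triplingGamma, triplingGamma, e1, e2, e3,
    Real.Gamma_add_one (div_ne_zero hs three_ne_zero),
    show s + 1 - 1 / 2 = s - 1 / 2 + 1 by ring, Real.rpow_add three_pos, Real.rpow_one]
  ring

lemma triplingGamma_one : triplingGamma 1 = 1 := by
  have h3 : Real.sqrt 3 ≠ 0 := by positivity
  have hpi : π ≠ 0 := Real.pi_ne_zero
  have hrefl := Real.Gamma_mul_Gamma_one_sub (1 / 3)
  rw [show (1 : ℝ) - 1 / 3 = 1 / 3 + 1 / 3 by norm_num,
    show π * (1 / 3) = π / 3 by ring, Real.sin_pi_div_three] at hrefl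
  rw [triplingGamma, show (1 : ℝ) / 3 + 2 / 3 = 1 by norm_num, Real.Gamma_one,
    show (1 : ℝ) - 1 / 2 = 1 / 2 by norm_num, ← Real.sqrt_eq_rpow, mul_one, hrefl]
  rw [div_eq_one_iff_eq (by positivity)]
  have : Real.sqrt 3 * Real.sqrt 3 = 3 := Real.mul_self_sqrt (by norm_num)
  field_simp

lemma triplingGamma_pos {s : ℝ} (hs : 0 < s) : 0 < triplingGamma s := by
  have h1 := Real.Gamma_pos_of_pos (show 0 < s / 3 by linarith)
  have h2 := Real.Gamma_pos_of_pos (show 0 < s / 3 + 1 / 3 by linarith)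
  have h3 := Real.Gamma_pos_of_pos (show 0 < s / 3 + 2 / 3 by linarith)
  have h4 : (0 : ℝ) < (3 : ℝ) ^ (s - 1 / 2) := Real.rpow_pos_of_pos three_pos _
  have h5 := Real.pi_pos
  rw [triplingGamma]
  positivity

lemma log_triplingGamma_eq :
    EqOn (Real.log ∘ triplingGamma)
      (fun s => Real.log (Real.Gamma (s / 3)) + Real.log (Real.Gamma (s / 3 + 1 / 3)) +
        Real.log (Real.Gamma (s / 3 + 2 / 3)) + s * Real.log 3 +
        (-(Real.log (2 * π) + 1 / 2 * Real.log 3))) (Ioi 0) := by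
  intro s hs
  have hs' : (0 : ℝ) < s := hs
  have h1 := Real.Gamma_pos_of_pos (show 0 < s / 3 by linarith)
  have h2 := Real.Gamma_pos_of_pos (show 0 < s / 3 + 1 / 3 by linarith)
  have h3 := Real.Gamma_pos_of_pos (show 0 < s / 3 + 2 / 3 by linarith)
  have h4 : (0 : ℝ) < (3 : ℝ) ^ (s - 1 / 2) := Real.rpow_pos_of_pos three_pos _
  have h5 : (0 : ℝ) < 2 * π := by positivity
  rw [Function.comp_apply, triplingGamma, Real.log_div (by positivity) h5.ne',
    Real.log_mul (by positivity) h4.ne', Real.log_mul (by positivity) h3.ne',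
    Real.log_mul h1.ne' h2.ne', Real.log_rpow three_pos]
  ring

lemma triplingGamma_log_convex : ConvexOn ℝ (Ioi (0 : ℝ)) (Real.log ∘ triplingGamma) := by
  refine ConvexOn.congr ?_ log_triplingGamma_eq.symm
  have t0 : ConvexOn ℝ (Ioi (0 : ℝ)) (fun x => Real.log (Real.Gamma (x / 3))) := by
    simpa using convexOn_log_Gamma_third (le_refl (0 : ℝ))
  have t1 := convexOn_log_Gamma_third (show (0:ℝ) ≤ 1/3 by norm_num)
  have t2 := convexOn_log_Gamma_third (show (0:ℝ) ≤ 2/3 by norm_num)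
  have lin : ConvexOn ℝ (Ioi (0 : ℝ)) (fun x : ℝ => x * Real.log 3) := by
    simpa only [smul_eq_mul, mul_comm, id_eq] using
      (convexOn_id (convex_Ioi (0 : ℝ))).smul (Real.log_pos (by norm_num)).le
  exact (((t0.add t1).add t2).add lin).add_const _

lemma triplingGamma_eq_Gamma {s : ℝ} (hs : 0 < s) : triplingGamma s = Real.Gamma s :=
  Real.eq_Gamma_of_log_convex triplingGamma_log_convex
    (fun hy => triplingGamma_add_one hy.ne') (fun hy => triplingGamma_pos hy)
    triplingGamma_one hs

/-- Gauss triplication formula for positive real arguments. -/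
theorem Gamma_triple {s : ℝ} (hs : 0 < s) :
    Real.Gamma (s / 3) * Real.Gamma (s / 3 + 1 / 3) * Real.Gamma (s / 3 + 2 / 3) *
      (3 : ℝ) ^ (s - 1 / 2) = 2 * π * Real.Gamma s := by
  have h := triplingGamma_eq_Gamma hs
  rw [triplingGamma, div_eq_iff (by positivity : (2 : ℝ) * π ≠ 0)] at h
  linarith [h]

lemma sin_prod : Real.sin (π / 5) * Real.sin (2 * π / 5) = Real.sqrt 5 / 4 := by
  have hc : Real.cos (π / 5) = (1 + Real.sqrt 5) / 4 := Real.cos_pi_div_five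
  have hs2q : Real.sin (π / 5) ^ 2 = 1 - ((1 + Real.sqrt 5) / 4) ^ 2 := by
    have := Real.sin_sq_add_cos_sq (π / 5)
    rw [hc] at this; linarith
  have h5 : Real.sqrt 5 ^ 2 = 5 := Real.sq_sqrt (by norm_num)
  rw [show 2 * π / 5 = 2 * (π / 5) by ring, Real.sin_two_mul, hc]
  linear_combination ((1 + Real.sqrt 5) / 2) * hs2q - ((Real.sqrt 5 + 3) / 32) * h5

lemma rpow_combo : ((3 : ℝ) ^ ((1 : ℝ) / 10)) ^ 2 * (3 : ℝ) ^ ((3 : ℝ) / 10)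
    = 4 * Real.sqrt (3 / 5) * (Real.sin (π / 5) * Real.sin (2 * π / 5)) := by
  rw [sin_prod, ← Real.rpow_natCast ((3:ℝ) ^ ((1:ℝ)/10)) 2, ← Real.rpow_mul (by norm_num : (0:ℝ) ≤ 3),
    ← Real.rpow_add (by norm_num : (0:ℝ) < 3)]
  norm_num
  rw [← Real.sqrt_eq_rpow]
  have h5 : Real.sqrt 5 ≠ 0 := by positivity
  field_simp

theorem real_main :
    Real.Gamma (9/15) ^ 2 * Real.Gamma (12/15) ^ 3 * Real.Gamma (6/15) /
      (Real.Gamma (8/15) ^ 2 * Real.Gamma (14/15) * Real.Gamma (13/15) ^ 2 * Real.Gamma (4/15))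
    = 1 / 2 * Real.sqrt (3/5) * (1 / Real.sin (3 * π / 15)) := by
  have h1 := Gamma_triple (show (0:ℝ) < 3/5 by norm_num)
  have h2 := Gamma_triple (show (0:ℝ) < 4/5 by norm_num)
  norm_num at h1 h2
  have h3 := Real.Gamma_mul_Gamma_one_sub (3/5)
  have h4 := Real.Gamma_mul_Gamma_one_sub (4/5)
  norm_num at h3 h4
  rw [show π * (3/5) = π - 2 * π / 5 by ring, Real.sin_pi_sub] at h3
  rw [show π * (4/5) = π - π / 5 by ring, Real.sin_pi_sub] at h4
  have hs1 : 0 < Real.sin (π / 5) :=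
    Real.sin_pos_of_pos_of_lt_pi (by positivity) (by nlinarith [Real.pi_pos])
  have hs2 : 0 < Real.sin (2 * π / 5) :=
    Real.sin_pos_of_pos_of_lt_pi (by positivity) (by nlinarith [Real.pi_pos])
  have gA := Real.Gamma_pos_of_pos (show (0:ℝ) < 1/5 by norm_num)
  have gB := Real.Gamma_pos_of_pos (show (0:ℝ) < 8/15 by norm_num)
  have gC := Real.Gamma_pos_of_pos (show (0:ℝ) < 13/15 by norm_num)
  have gD := Real.Gamma_pos_of_pos (show (0:ℝ) < 4/15 by norm_num)
  have gE := Real.Gamma_pos_of_pos (show (0:ℝ) < 3/5 by norm_num)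
  have gF := Real.Gamma_pos_of_pos (show (0:ℝ) < 14/15 by norm_num)
  have gG := Real.Gamma_pos_of_pos (show (0:ℝ) < 4/5 by norm_num)
  have gH := Real.Gamma_pos_of_pos (show (0:ℝ) < 2/5 by norm_num)
  have hu : (0:ℝ) < (3:ℝ) ^ ((1:ℝ)/10) := Real.rpow_pos_of_pos (by norm_num) _
  have hv : (0:ℝ) < (3:ℝ) ^ ((3:ℝ)/10) := Real.rpow_pos_of_pos (by norm_num) _
  have hpi := Real.pi_pos
  have hC : Real.Gamma (13/15)
      = 2 * π * Real.Gamma (3/5) / (Real.Gamma (1/5) * Real.Gamma (8/15) * (3:ℝ) ^ ((1:ℝ)/10)) := by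
    field_simp
    linear_combination h1
  have hF : Real.Gamma (14/15)
      = 2 * π * Real.Gamma (4/5) / (Real.Gamma (4/15) * Real.Gamma (3/5) * (3:ℝ) ^ ((3:ℝ)/10)) := by
    field_simp
    linear_combination h2
  rw [eq_div_iff hs2.ne'] at h3
  rw [eq_div_iff hs1.ne'] at h4
  have hH : Real.Gamma (2/5) = π / (Real.Gamma (3/5) * Real.sin (2 * π / 5)) := by
    field_simp
    linear_combination h3
  have hA : Real.Gamma (1/5) = π / (Real.Gamma (4/5) * Real.sin (π / 5)) := by
    field_simp
    linear_combination h4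
  rw [show (9/15:ℝ) = 3/5 by norm_num, show (12/15:ℝ) = 4/5 by norm_num,
    show (6/15:ℝ) = 2/5 by norm_num, show 3 * π / 15 = π / 5 by ring,
    hH, hC, hF, hA]
  have trans : Real.Gamma (3/5) ^ 2 * Real.Gamma (4/5) ^ 3 *
        (π / (Real.Gamma (3/5) * Real.sin (2 * π / 5))) /
      (Real.Gamma (8/15) ^ 2 *
        (2 * π * Real.Gamma (4/5) / (Real.Gamma (4/15) * Real.Gamma (3/5) * (3:ℝ) ^ ((3:ℝ)/10))) *
        (2 * π * Real.Gamma (3/5) / (π / (Real.Gamma (4/5) * Real.sin (π / 5)) *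
          Real.Gamma (8/15) * (3:ℝ) ^ ((1:ℝ)/10))) ^ 2 *
        Real.Gamma (4/15))
      = ((3:ℝ) ^ ((1:ℝ)/10)) ^ 2 * (3:ℝ) ^ ((3:ℝ)/10) /
        (8 * Real.sin (π / 5) ^ 2 * Real.sin (2 * π / 5)) := by
    field_simp
    ring
  rw [trans, rpow_combo]
  field_simp
  rw [mul_div_assoc, div_self (by rw [show π * 2 / 5 = 2 * π / 5 by ring]; exact hs2.ne')]
  norm_num

end GammaTripAux

/-- Example 6.4.9. Exact evaluation of the Gamma-value of the equation
`x₉·x₁₂/(x₈·x₁₃)` for the Mumford–Tate group of the Jacobian of `y² = x¹⁵ + 1`: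
`Γ(9/15)²·Γ(12/15)³·Γ(6/15) / (Γ(8/15)²·Γ(14/15)·Γ(13/15)²·Γ(4/15))
  = (1/2)·√(3/5)·(1/sin(3π/15))`. -/
theorem gamma_value_x9x12_x8x13 :
    Complex.Gamma (9 / 15) ^ 2 * Complex.Gamma (12 / 15) ^ 3 * Complex.Gamma (6 / 15) /
        (Complex.Gamma (8 / 15) ^ 2 * Complex.Gamma (14 / 15) *
          Complex.Gamma (13 / 15) ^ 2 * Complex.Gamma (4 / 15))
      = (((1 / 2 : ℝ) * Real.sqrt (3 / 5) * (1 / Real.sin (3 * Real.pi / 15)) : ℝ) : ℂ) := by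
  rw [show (9/15 : ℂ) = ((9/15 : ℝ) : ℂ) by norm_num,
    show (12/15 : ℂ) = ((12/15 : ℝ) : ℂ) by norm_num,
    show (6/15 : ℂ) = ((6/15 : ℝ) : ℂ) by norm_num,
    show (8/15 : ℂ) = ((8/15 : ℝ) : ℂ) by norm_num,
    show (14/15 : ℂ) = ((14/15 : ℝ) : ℂ) by norm_num,
    show (13/15 : ℂ) = ((13/15 : ℝ) : ℂ) by norm_num,
    show (4/15 : ℂ) = ((4/15 : ℝ) : ℂ) by norm_num]
  simp only [Complex.Gamma_ofReal]
  exact_mod_cast GammaTripAux.real_main
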